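/- Let V be a vertex algebra, (W, Y_W) a quasi V-module at infinity, and u, v ∈ V. If p(x₁,x₂) is ANY nonzero polynomial such that p(x₁,x₂)Y_W(u,x₁)Y_W(v,x₂) ∈ Hom(W, W((x₁⁻¹,x₂⁻¹))), then the weak associativity relation (p(x₁,x₂)Y_W(u,x₁)Y_W(v,x₂))|_{x₁=x₂+x₀} = p(x₀+x₂,x₂) Y_W(Y(u,x₀)v, x₂) holds for that polynomial p. -/

import Mathlib

open MvPolynomial

noncomputable section

/-- Generalized binomial coefficient `C(n, k)` for `n : ℤ`, as a complex number. -/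
def zchoose (n : ℤ) (k : ℕ) : ℂ :=
  (∏ j ∈ Finset.range k, ((n : ℂ) - (j : ℂ))) / (Nat.factorial k : ℂ)

section TwoVar

variable {W : Type} [AddCommGroup W] [Module ℂ W]

/-- For a two-variable formal series `Σ F m n x₁^{-m-1} x₂^{-n-1}` with coefficients in a
ℂ-module, this is the coefficient of `x₁^{-m-1} x₂^{-n-1}` in its product with the
polynomial `p(x₁,x₂)`. -/
def polyMul (p : MvPolynomial (Fin 2) ℂ) (F : ℤ → ℤ → W) (m n : ℤ) : W :=
  ∑ᶠ d : Fin 2 →₀ ℕ, p.coeff d • F (m + d 0) (n + d 1)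

/-- For `A(x₁,x₂) = Σ F m n x₁^{-m-1} x₂^{-n-1}`, the coefficient of `x₀^{-k-1} x₂^{-l-1}`
in the substitution `A(x₂+x₀, x₂)`, where `(x₂+x₀)^{-m-1}` is expanded in nonnegative
powers of `x₀`.  It is nonzero only for `k < 0` (nonnegative powers of `x₀`). -/
def substX1 (F : ℤ → ℤ → W) (k l : ℤ) : W :=
  if k < 0 then ∑ᶠ m : ℤ, zchoose (-m-1) (-k-1).toNat • F m (l - m + k) else 0

/-- `p(x₀+x₂, x₂)` as a polynomial in the variables `(x₀, x₂)`, for `p` a polynomial in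
variables `(x₁, x₂)`. -/
def substPoly (p : MvPolynomial (Fin 2) ℂ) : MvPolynomial (Fin 2) ℂ :=
  MvPolynomial.aeval ![X 0 + X 1, X 1] p

end TwoVar

section Eo

variable {W : Type} [AddCommGroup W] [Module ℂ W]

/-- The identity operator `1_W`, viewed as the element `1_W x^0` of `ℰᵒ(W)`;
its coefficient at `x^{-n-1}` is `1` iff `n = -1`. -/
def idSeries : ℤ → Module.End ℂ W := fun n => if n = -1 then 1 else 0

/-- `a(x) = Σ aₙ x^{-n-1}` lies in `ℰᵒ(W) = Hom(W, W((x⁻¹)))`:  for each `w`, the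
coefficients `aₙ w` vanish for `n` sufficiently negative (finitely many positive
powers of `x`). -/
def IsEo (a : ℤ → Module.End ℂ W) : Prop := ∀ w : W, ∃ N : ℤ, ∀ n < N, a n w = 0

/-- `p(x₁,x₂) a(x₁) b(x₂) ∈ Hom(W, W((x₁⁻¹, x₂⁻¹)))`. -/
def Compat (p : MvPolynomial (Fin 2) ℂ) (a b : ℤ → Module.End ℂ W) : Prop :=
  ∀ w : W, ∃ N : ℤ, ∀ m n : ℤ, (m < N ∨ n < N) →
    polyMul p (fun m n => a m (b n w)) m n = 0

/-- Weak associativity for the polynomial `p`: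
`(p(x₁,x₂) a(x₁) b(x₂))|_{x₁ = x₂+x₀} = p(x₀+x₂,x₂) ⬝ Σ_{k,l} c k l x₀^{-k-1} x₂^{-l-1}`. -/
def AssocEq (p : MvPolynomial (Fin 2) ℂ) (a b : ℤ → Module.End ℂ W)
    (c : ℤ → ℤ → Module.End ℂ W) : Prop :=
  ∀ (w : W) (k l : ℤ),
    substX1 (polyMul p (fun m n => a m (b n w))) k l
      = polyMul (substPoly p) (fun k l => c k l w) k l

/-- `c` is the family of products `Y_{ℰᵒ}(a(x),x₀)b(x) = Σ_n (a(x)_n b(x)) x₀^{-n-1}`: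
`c n l` is the coefficient of `x^{-l-1}` in `a(x)_n b(x)`.  It is characterized by:
truncation in `x₀`, each `a(x)_n b(x) ∈ ℰᵒ(W)`, and for every nonzero compatible
polynomial `p`, `p(x+x₀,x) Y_{ℰᵒ}(a(x),x₀)b(x) = (p(x₁,x)a(x₁)b(x))|_{x₁=x+x₀}`. -/
def IsYEoProd (a b : ℤ → Module.End ℂ W) (c : ℤ → ℤ → Module.End ℂ W) : Prop :=
  (∀ w : W, ∃ N : ℤ, ∀ n : ℤ, N ≤ n → ∀ l : ℤ, c n l w = 0) ∧
  (∀ (w : W) (n : ℤ), ∃ M : ℤ, ∀ l < M, c n l w = 0) ∧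
  ∀ p : MvPolynomial (Fin 2) ℂ, p ≠ 0 → Compat p a b →
    ∀ (w : W) (k l : ℤ),
      polyMul (substPoly p) (fun n l => c n l w) k l
        = substX1 (polyMul p (fun m n => a m (b n w))) k l

end Eo

/-- A vertex algebra over ℂ, with vertex operator map `Y(v,x) = Σ_n (Y v n) x^{-n-1}`,
vacuum `one`, truncation, vacuum and creation properties, and the Jacobi identity in
component form. -/
structure VertexAlg (V : Type) [AddCommGroup V] [Module ℂ V] where
  Y : V →ₗ[ℂ] (ℤ → Module.End ℂ V)
  one : V
  trunc : ∀ u v : V, ∃ N : ℤ, ∀ n : ℤ, N ≤ n → Y u n v = 0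
  vacuum : ∀ n : ℤ, Y one n = if n = -1 then 1 else 0
  creation_neg : ∀ v : V, Y v (-1) one = v
  creation : ∀ v : V, ∀ n : ℤ, 0 ≤ n → Y v n one = 0
  jacobi : ∀ u v w : V, ∀ m n k : ℤ,
    (∑ᶠ i : ℕ, ((-1:ℂ)^i * zchoose k i) • Y u (m + k - i) (Y v (n + i) w))
      - (-1:ℂ)^k • (∑ᶠ i : ℕ, ((-1:ℂ)^i * zchoose k i) • Y v (n + k - i) (Y u (m + i) w))
    = ∑ᶠ i : ℕ, zchoose m i • Y (Y u (k + i) v) (m + n - i) w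

/-- A quasi module at infinity for a vertex algebra `VA` on `V`:  a linear map
`Y_W : V → ℰᵒ(W)` with `Y_W(𝟏,x) = 1_W`, such that for any `u,v` there is a nonzero
polynomial `p(x₁,x₂)` with `p(x₁,x₂)Y_W(u,x₁)Y_W(v,x₂) ∈ Hom(W,W((x₁⁻¹,x₂⁻¹)))` and
`(p(x₁,x₂)Y_W(u,x₁)Y_W(v,x₂))|_{x₁=x₂+x₀} = p(x₀+x₂,x₂)Y_W(Y(u,x₀)v,x₂)`. -/
structure QModInf {V : Type} [AddCommGroup V] [Module ℂ V] (VA : VertexAlg V)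
    (W : Type) [AddCommGroup W] [Module ℂ W] where
  Y : V →ₗ[ℂ] (ℤ → Module.End ℂ W)
  trunc : ∀ (v : V) (w : W), ∃ N : ℤ, ∀ n < N, Y v n w = 0
  vacuum : ∀ n : ℤ, Y VA.one n = if n = -1 then 1 else 0
  weak_assoc : ∀ u v : V, ∃ p : MvPolynomial (Fin 2) ℂ, p ≠ 0 ∧
    Compat p (Y u) (Y v) ∧ AssocEq p (Y u) (Y v) (fun k l => Y (VA.Y u k v) l)

section Delta

variable {W : Type} [AddCommGroup W] [Module ℂ W]

/-- The coefficient of `x₁^{a} x₂^{b}` in `(1/j!) (∂/∂x₂)^j x₁⁻¹ δ(g(x₂)/x₁)` for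
`g(x) = αx+β`, where `g(x₂)^n` is expanded in `ℂ((x₂⁻¹))`. -/
def deltaDCoeff (α β : ℂ) (j : ℕ) (a b : ℤ) : ℂ :=
  if 0 ≤ -a - 1 - j - b then
    zchoose (-a-1) (-a-1-j-b).toNat * α ^ (b + j) * β ^ (-a-1-j-b).toNat
      * zchoose (b + j) j
  else 0

/-- The coefficient of `x₁^{-m-1} x₂^{-n-1}` in
`A(x₂) ⬝ (1/j!) (∂/∂x₂)^j x₁⁻¹ δ(g(x₂)/x₁)` (with `g(x) = αx+β`), applied to `w`. -/
def mulDeltaD (A : ℤ → Module.End ℂ W) (α β : ℂ) (j : ℕ) (m n : ℤ) (w : W) : W :=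
  ∑ᶠ l : ℤ, deltaDCoeff α β j (-m-1) (l - n) • A l w

/-- The coefficient of `x^{-l-1}` in `(αx+β)^{-n-1}`, expanded in `ℂ((x⁻¹))`; so for
`a(x) ∈ ℰᵒ(W)` and `g(x) = αx+β ∈ G`, the coefficient of `x^{-l-1}` in `a(g(x))` is
`Σ_n gcoeff α β l n • aₙ`. -/
def gcoeff (α β : ℂ) (l n : ℤ) : ℂ :=
  if 0 ≤ l - n then zchoose (-n-1) (l-n).toNat * α ^ (-l-1) * β ^ (l-n).toNat else 0

end Delta

/-- A group homomorphism `Ψ : Γ → G`, where `G` is the group (under composition) of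
linear polynomials `g(x) = αx + β` with `α ∈ ℂˣ, β ∈ ℂ`; encoded by
`Ψ(g)(x) = (A g) x + B g`. -/
structure HomToG (Γ : Type) [Group Γ] where
  A : Γ →* ℂˣ
  B : Γ → ℂ
  B_one : B 1 = 0
  B_mul : ∀ g h : Γ, B (g * h) = (A g : ℂ) * B h + B g

namespace HomToG

variable {Γ : Type} [Group Γ]

/-- The leading coefficient of `Ψ(g)⁻¹(x) = α⁻¹ x - α⁻¹ β`. -/
def invA (Ψ : HomToG Γ) (g : Γ) : ℂ := (Ψ.A g : ℂ)⁻¹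

/-- The constant coefficient of `Ψ(g)⁻¹(x) = α⁻¹ x - α⁻¹ β`. -/
def invB (Ψ : HomToG Γ) (g : Γ) : ℂ := -((Ψ.A g : ℂ)⁻¹) * Ψ.B g

end HomToG

/-- The polynomial `∏_{σ ∈ s} (x₁ - Ψ(σ)(x₂))`, a product of linear factors
`x₁ - g(x₂)` with `g ∈ Ψ(Γ)` (with multiplicities). -/
def gpoly {Γ : Type} [Group Γ] (Ψ : HomToG Γ) (s : Multiset Γ) :
    MvPolynomial (Fin 2) ℂ :=
  (s.map fun σ => X 0 - (C ((Ψ.A σ : ℂ)) * X 1 + C (Ψ.B σ))).prod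

/-- A vertex `Γ`-algebra: a vertex algebra `V` equipped with group homomorphisms
`L : Γ → GL(V)` and `φ : Γ → ℂˣ` such that `L(g)𝟏 = 𝟏` and
`L(g)Y(u,x)v = Y(L(g)u, φ(g)x) L(g)v`. -/
structure VertexGammaAlg (Γ : Type) [Group Γ] (V : Type) [AddCommGroup V]
    [Module ℂ V] extends VertexAlg V where
  L : Γ →* (V ≃ₗ[ℂ] V)
  phi : Γ →* ℂˣ
  L_vac : ∀ g : Γ, L g one = one
  L_Y : ∀ (g : Γ) (u v : V) (n : ℤ),
    L g (Y u n v) = ((phi g : ℂ) ^ (-n-1 : ℤ)) • Y (L g u) n (L g v)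

/-- A quasi module at infinity for a vertex `Γ`-algebra `GV`: a quasi module at
infinity for the underlying vertex algebra, together with a group homomorphism
`Ψ : Γ → G` with `Φ ∘ Ψ = φ`, satisfying the covariance
`Y_W(L(g)v, x) = Y_W(v, Ψ(g)⁻¹(x))` and `Ψ(Γ)`-locality. -/
structure GQModInf (Γ : Type) [Group Γ] {V : Type} [AddCommGroup V] [Module ℂ V]
    (GV : VertexGammaAlg Γ V) (W : Type) [AddCommGroup W] [Module ℂ W]
    extends QModInf GV.toVertexAlg W where
  Psi : HomToG Γ
  phi_eq : Psi.A = GV.phi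
  covariance : ∀ (g : Γ) (v : V) (l : ℤ) (w : W),
    Y (GV.L g v) l w = ∑ᶠ n : ℤ, gcoeff (Psi.invA g) (Psi.invB g) l n • Y v n w
  gammaLocal : ∀ u v : V, ∃ s : Multiset Γ, ∀ m n : ℤ,
    polyMul (gpoly Psi s) (fun m n => Y u m * Y v n - Y v n * Y u m) m n = 0

section LieInf

/-- The coefficient of `t^i` in `(αt+β)^m`, expanded in `ℂ((t⁻¹))`. -/
def gco (α β : ℂ) (m i : ℤ) : ℂ :=
  if 0 ≤ m - i then zchoose m (m-i).toNat * α ^ i * β ^ (m-i).toNat else 0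

/-- `p = Σ pₙ tⁿ` lies in `ℂ((t⁻¹))`: upper truncated in `t`. -/
def KTrunc (p : ℤ → ℂ) : Prop := ∃ N : ℤ, ∀ n : ℤ, N < n → p n = 0

/-- The coefficients of `p(αt+β)` for `p = Σ pₘ tᵐ ∈ ℂ((t⁻¹))`. -/
def substK (α β : ℂ) (p : ℤ → ℂ) : ℤ → ℂ := fun i => ∑ᶠ m : ℤ, gco α β m i * p m

variable {𝔤 : Type} [LieRing 𝔤] [LieAlgebra ℂ 𝔤]

/-- The element `a ⊗ p(t)` of `ĝ(∞) = (𝔤 ⊗ ℂ((t⁻¹))) ⊕ ℂk`, realized inside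
`(ℤ → 𝔤) × ℂ` via coefficient functions: the `t^n`-coefficient is `p n • a`. -/
def elemT (a : 𝔤) (p : ℤ → ℂ) : (ℤ → 𝔤) × ℂ := (fun n => p n • a, 0)

/-- The central element `k`. -/
def kvec {𝔤 : Type} [LieRing 𝔤] [LieAlgebra ℂ 𝔤] : (ℤ → 𝔤) × ℂ := (0, 1)

/-- The coefficient function of `tⁿ ∈ ℂ((t⁻¹))`. -/
def tpow (n : ℤ) : ℤ → ℂ := fun m => if m = n then 1 else 0

/-- `ĝ(∞) = (𝔤 ⊗ ℂ((t⁻¹))) ⊕ ℂ k`, realized as the span of the elements `a ⊗ p(t)`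
(`p` truncated) and `k` inside `(ℤ → 𝔤) × ℂ`. -/
def Ehat (𝔤 : Type) [LieRing 𝔤] [LieAlgebra ℂ 𝔤] : Submodule ℂ ((ℤ → 𝔤) × ℂ) :=
  Submodule.span ℂ ({x | ∃ (a : 𝔤) (p : ℤ → ℂ), KTrunc p ∧ x = elemT a p} ∪ {kvec})

lemma elemT_mem (a : 𝔤) (p : ℤ → ℂ) (hp : KTrunc p) : elemT a p ∈ Ehat 𝔤 :=
  Submodule.subset_span (Or.inl ⟨a, p, hp, rfl⟩)

lemma kvec_mem : (kvec : (ℤ → 𝔤) × ℂ) ∈ Ehat 𝔤 :=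
  Submodule.subset_span (Or.inr rfl)

lemma tpow_trunc (n : ℤ) : KTrunc (tpow n) := ⟨n, fun m hm => if_neg (by omega)⟩

variable {Γ : Type} [Group Γ]

/-- The twisted bracket `[·,·]_Γ` on `ĝ(∞)`, given on generators by
`[a⊗p(t), b⊗q(t)]_Γ = Σ_{g∈Γ} [ga,b] ⊗ p(g⁻¹(t))q(t)
   + Res_t q(t) (d/dt)p(g⁻¹(t)) ⟨ga,b⟩ k`, and `k` central. -/
def brG (ρ : Γ →* (𝔤 ≃ₗ[ℂ] 𝔤)) (Ψ : HomToG Γ) (Bf : 𝔤 →ₗ[ℂ] 𝔤 →ₗ[ℂ] ℂ)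
    (x y : (ℤ → 𝔤) × ℂ) : (ℤ → 𝔤) × ℂ :=
  (fun n => ∑ᶠ q : Γ × ℤ × ℤ,
      gco (Ψ.invA q.1) (Ψ.invB q.1) q.2.1 (n - q.2.2) • ⁅ρ q.1 (x.1 q.2.1), y.1 q.2.2⁆,
   ∑ᶠ q : Γ × ℤ × ℤ,
      (-(q.2.2 : ℂ)) * gco (Ψ.invA q.1) (Ψ.invB q.1) q.2.1 (-q.2.2)
        * Bf (ρ q.1 (x.1 q.2.1)) (y.1 q.2.2))

/-- The subspace of `ĝ(∞)` linearly spanned by the elements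
`g a ⊗ p(t) - a ⊗ p(g(t))` for `g ∈ Γ`, `a ∈ 𝔤`, `p(t) ∈ ℂ((t⁻¹))`. -/
def Sgen (ρ : Γ →* (𝔤 ≃ₗ[ℂ] 𝔤)) (Ψ : HomToG Γ) : Submodule ℂ ((ℤ → 𝔤) × ℂ) :=
  Submodule.span ℂ {x | ∃ (g : Γ) (a : 𝔤) (p : ℤ → ℂ), KTrunc p ∧
    x = elemT (ρ g a) p - elemT a (substK ((Ψ.A g : ℂ)) (Ψ.B g) p)}

/-- The untwisted bracket of the affine-type Lie algebra `ĝ(∞)`: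
`[a⊗p(t), b⊗q(t)] = [a,b] ⊗ p(t)q(t) + Res_t p'(t)q(t) ⟨a,b⟩ k`, `k` central. -/
def br0 (Bf : 𝔤 →ₗ[ℂ] 𝔤 →ₗ[ℂ] ℂ) (x y : (ℤ → 𝔤) × ℂ) : (ℤ → 𝔤) × ℂ :=
  (fun n => ∑ᶠ i : ℤ, ⁅x.1 i, y.1 (n - i)⁆,
   ∑ᶠ i : ℤ, (i : ℂ) * Bf (x.1 i) (y.1 (-i)))

/-- The action of `g ∈ Γ` on `ĝ(∞)`: `g ⬝ (a ⊗ p(t) + λk) = ga ⊗ p(g⁻¹(t)) + λk`. -/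
def actG (ρ : Γ →* (𝔤 ≃ₗ[ℂ] 𝔤)) (Ψ : HomToG Γ) (g : Γ) (x : (ℤ → 𝔤) × ℂ) :
    (ℤ → 𝔤) × ℂ :=
  (fun n => ∑ᶠ m : ℤ, gco (Ψ.invA g) (Ψ.invB g) m n • (ρ g (x.1 m)), x.2)

end LieInf

section AuxWA
variable {W : Type} [AddCommGroup W] [Module ℂ W]

-- basic lemmas
lemma polyMul_eq_sum (p : MvPolynomial (Fin 2) ℂ) (F : ℤ → ℤ → W) (m n : ℤ)
    {S : Finset (Fin 2 →₀ ℕ)} (hS : p.support ⊆ S) :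
    polyMul p F m n = ∑ d ∈ S, p.coeff d • F (m + d 0) (n + d 1) := by
  apply finsum_eq_finset_sum_of_support_subset
  intro d hd
  simp only [Function.mem_support, ne_eq] at hd
  by_contra hdS
  exact hd (by rw [notMem_support_iff.mp fun h => hdS (hS h), zero_smul])

lemma polyMul_congr (p : MvPolynomial (Fin 2) ℂ) {F G : ℤ → ℤ → W}
    (h : ∀ a b, F a b = G a b) (m n : ℤ) : polyMul p F m n = polyMul p G m n := by
  unfold polyMul; exact finsum_congr fun d => by rw [h]

lemma polyMul_C (a : ℂ) (F : ℤ → ℤ → W) (m n : ℤ) :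
    polyMul (C a) F m n = a • F m n := by
  rw [polyMul_eq_sum (C a) F m n (S := {0})
    (fun d hd => by
      rw [mem_support_iff, coeff_C] at hd
      simp only [Finset.mem_singleton]
      by_contra h
      exact hd (if_neg (fun h' => h h'.symm)))]
  simp

lemma polyMul_add_poly (p q : MvPolynomial (Fin 2) ℂ) (F : ℤ → ℤ → W) (m n : ℤ) :
    polyMul (p + q) F m n = polyMul p F m n + polyMul q F m n := by
  rw [polyMul_eq_sum (p+q) F m n (S := p.support ∪ q.support) (support_add),
    polyMul_eq_sum p F m n (S := p.support ∪ q.support) Finset.subset_union_left,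
    polyMul_eq_sum q F m n (S := p.support ∪ q.support) Finset.subset_union_right,
    ← Finset.sum_add_distrib]
  exact Finset.sum_congr rfl fun d _ => by rw [coeff_add, add_smul]

lemma polyMul_add_F (p : MvPolynomial (Fin 2) ℂ) (F G : ℤ → ℤ → W) (m n : ℤ) :
    polyMul p (fun a b => F a b + G a b) m n = polyMul p F m n + polyMul p G m n := by
  rw [polyMul_eq_sum p _ m n (subset_refl _), polyMul_eq_sum p F m n (subset_refl _),
    polyMul_eq_sum p G m n (subset_refl _), ← Finset.sum_add_distrib]
  exact Finset.sum_congr rfl fun d _ => by rw [smul_add]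

lemma polyMul_sub_F (p : MvPolynomial (Fin 2) ℂ) (F G : ℤ → ℤ → W) (m n : ℤ) :
    polyMul p (fun a b => F a b - G a b) m n = polyMul p F m n - polyMul p G m n := by
  rw [polyMul_eq_sum p _ m n (subset_refl _), polyMul_eq_sum p F m n (subset_refl _),
    polyMul_eq_sum p G m n (subset_refl _), ← Finset.sum_sub_distrib]
  exact Finset.sum_congr rfl fun d _ => by rw [smul_sub]

lemma polyMul_mul_X (p : MvPolynomial (Fin 2) ℂ) (i : Fin 2) (F : ℤ → ℤ → W) (m n : ℤ) :
    polyMul (p * X i) F m n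
      = polyMul p F (m + ((Finsupp.single i 1 : Fin 2 →₀ ℕ) 0 : ℤ))
          (n + ((Finsupp.single i 1 : Fin 2 →₀ ℕ) 1 : ℤ)) := by
  have hemb : Function.Injective (fun d : Fin 2 →₀ ℕ => d + Finsupp.single i 1) :=
    add_left_injective _
  have hsub : (p * X i).support ⊆ p.support.map ⟨_, hemb⟩ := by
    intro d hd
    rw [mem_support_iff, coeff_mul_X'] at hd
    simp only [Finset.mem_map, Function.Embedding.coeFn_mk]
    split at hd
    · refine ⟨d - Finsupp.single i 1, mem_support_iff.mpr hd, ?_⟩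
      ext j
      rename_i hi
      simp only [Finsupp.add_apply, Finsupp.tsub_apply]
      rcases eq_or_ne i j with rfl | hij
      · rw [Finsupp.single_eq_same]
        have := Finsupp.mem_support_iff.mp hi
        omega
      · rw [Finsupp.single_eq_of_ne' hij]
        omega
    · exact absurd rfl hd
  rw [polyMul_eq_sum _ F m n hsub, Finset.sum_map,
    polyMul_eq_sum p F _ _ (subset_refl _)]
  refine Finset.sum_congr rfl fun d _ => ?_
  simp only [Function.Embedding.coeFn_mk, coeff_mul_X, Finsupp.add_apply]
  congr 1 <;> push_cast <;> ring

lemma polyMul_comm (p q : MvPolynomial (Fin 2) ℂ) (F : ℤ → ℤ → W) (m n : ℤ) :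
    polyMul p (fun a b => polyMul q F a b) m n
      = polyMul q (fun a b => polyMul p F a b) m n := by
  rw [polyMul_eq_sum p _ m n (subset_refl _), polyMul_eq_sum q _ m n (subset_refl _)]
  have : ∀ (d e : Fin 2 →₀ ℕ),
      q.coeff e • F (m + d 0 + e 0) (n + d 1 + e 1)
      = q.coeff e • F ((m + e 0) + d 0) ((n + e 1) + d 1) := by
    intro d e; congr 1 <;> ring
  calc ∑ d ∈ p.support, p.coeff d • polyMul q F (m + d 0) (n + d 1)
      = ∑ d ∈ p.support, ∑ e ∈ q.support,
          p.coeff d • (q.coeff e • F ((m + e 0) + d 0) ((n + e 1) + d 1)) := by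
        refine Finset.sum_congr rfl fun d _ => ?_
        rw [polyMul_eq_sum q F _ _ (subset_refl _), Finset.smul_sum]
        refine Finset.sum_congr rfl fun e _ => ?_
        rw [this]
    _ = ∑ e ∈ q.support, q.coeff e • polyMul p F (m + e 0) (n + e 1) := by
        rw [Finset.sum_comm]
        refine Finset.sum_congr rfl fun e _ => ?_
        rw [polyMul_eq_sum p F _ _ (subset_refl _), Finset.smul_sum]
        refine Finset.sum_congr rfl fun d _ => ?_
        rw [smul_comm]

end AuxWA

section TwoVar2
variable {W : Type} [AddCommGroup W] [Module ℂ W]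

-- corollaries for i = 0, 1
lemma polyMul_mul_X0 (p : MvPolynomial (Fin 2) ℂ) (F : ℤ → ℤ → W) (m n : ℤ) :
    polyMul (p * X 0) F m n = polyMul p F (m + 1) n := by
  rw [polyMul_mul_X]
  norm_num [Finsupp.single_eq_same, Finsupp.single_eq_of_ne (show (0:Fin 2) ≠ 1 by decide)]

lemma polyMul_mul_X1 (p : MvPolynomial (Fin 2) ℂ) (F : ℤ → ℤ → W) (m n : ℤ) :
    polyMul (p * X 1) F m n = polyMul p F m (n + 1) := by
  rw [polyMul_mul_X]
  norm_num [Finsupp.single_eq_same, Finsupp.single_eq_of_ne (show (1:Fin 2) ≠ 0 by decide)]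

-- truncation
def Trunc2 (G : ℤ → ℤ → W) : Prop := ∃ N : ℤ, ∀ m n : ℤ, (m < N ∨ n < N) → G m n = 0

lemma trunc2_polyMul {G : ℤ → ℤ → W} (h : Trunc2 G) (p : MvPolynomial (Fin 2) ℂ) :
    Trunc2 (fun m n => polyMul p G m n) := by
  obtain ⟨N, hN⟩ := h
  set B : ℕ := p.support.sup fun d => max (d 0) (d 1) with hB
  refine ⟨N - B, fun m n hmn => ?_⟩
  show polyMul p G m n = 0
  rw [polyMul_eq_sum p G m n (subset_refl _)]
  refine Finset.sum_eq_zero fun d hd => ?_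
  have h0 : d 0 ≤ B := le_trans (le_max_left _ _) (Finset.le_sup (f := fun d => max (d 0) (d 1)) hd)
  have h1 : d 1 ≤ B := le_trans (le_max_right _ _) (Finset.le_sup (f := fun d => max (d 0) (d 1)) hd)
  rw [hN (m + d 0) (n + d 1) (by omega), smul_zero]

lemma trunc2_supportFinite {G : ℤ → ℤ → W} (h : Trunc2 G) (c : ℤ → ℂ) (k l : ℤ) :
    (Function.support fun m => c m • G m (l - m + k)).Finite := by
  obtain ⟨N, hN⟩ := h
  apply Set.Finite.subset (Set.finite_Icc N (l + k - N))
  intro m hm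
  simp only [Function.mem_support, ne_eq] at hm
  simp only [Set.mem_Icc]
  constructor
  · by_contra h'; exact hm (by rw [hN m _ (Or.inl (by omega)), smul_zero])
  · by_contra h'; exact hm (by rw [hN m _ (Or.inr (by omega)), smul_zero])

-- Pascal
lemma zchoose_zero (n : ℤ) : zchoose n 0 = 1 := by simp [zchoose]

lemma zchoose_succ_succ (n : ℤ) (j : ℕ) :
    zchoose (n + 1) (j + 1) = zchoose n (j + 1) + zchoose n j := by
  unfold zchoose
  push_cast
  rw [Finset.prod_range_succ' (fun i => ((n:ℂ) + 1 - i)) j,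
    Finset.prod_range_succ (fun i => ((n:ℂ) - i)) j]
  have hfac : ((j+1).factorial : ℂ) ≠ 0 := Nat.cast_ne_zero.mpr (Nat.factorial_ne_zero _)
  have hfac' : ((j).factorial : ℂ) ≠ 0 := Nat.cast_ne_zero.mpr (Nat.factorial_ne_zero _)
  have hprod : ∀ i ∈ Finset.range j, ((n:ℂ) + 1 - (↑(i+1):ℂ)) = (n:ℂ) - i := by
    intro i _; push_cast; ring
  have hj1 : ((j:ℂ) + 1) ≠ 0 := by
    have := (Nat.cast_ne_zero (R := ℂ)).mpr j.succ_ne_zero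
    push_cast at this
    exact this
  rw [Finset.prod_congr rfl hprod, Nat.factorial_succ]
  push_cast
  field_simp
  ring

lemma substX1_congr {F G : ℤ → ℤ → W} (h : ∀ a b, F a b = G a b) (k l : ℤ) :
    substX1 F k l = substX1 G k l := by
  unfold substX1
  refine if_congr Iff.rfl (finsum_congr fun m => by rw [h]) rfl

lemma substX1_shift1 (H : ℤ → ℤ → W) (k l : ℤ) :
    substX1 (fun m n => H m (n + 1)) k l = substX1 H k (l + 1) := by
  unfold substX1
  refine if_congr Iff.rfl (finsum_congr fun m => ?_) rfl
  congr 1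
  ring

lemma substX1_shift0 {H : ℤ → ℤ → W} (hH : Trunc2 H) (k l : ℤ) :
    substX1 (fun m n => H (m + 1) n) k l = substX1 H (k + 1) l + substX1 H k (l + 1) := by
  unfold substX1
  by_cases hk : k < 0
  swap
  · rw [if_neg hk, if_neg (by omega), if_neg (by omega), add_zero]
  rw [if_pos hk]
  have hre : (∑ᶠ m : ℤ, zchoose (-m-1) (-k-1).toNat • H (m + 1) (l - m + k))
      = ∑ᶠ m : ℤ, zchoose (-m) (-k-1).toNat • H m (l - m + k + 1) := by
    rw [← finsum_comp_equiv (Equiv.addRight (1:ℤ))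
      (f := fun m => zchoose (-m) (-k-1).toNat • H m (l - m + k + 1))]
    refine finsum_congr fun m => ?_
    show zchoose (-m-1) (-k-1).toNat • H (m + 1) (l - m + k)
        = zchoose (-(m+1)) (-k-1).toNat • H (m+1) (l - (m+1) + k + 1)
    congr 2 <;> ring
  rw [hre]
  rcases eq_or_lt_of_le (show k ≤ -1 by omega) with hk1 | hk2
  · -- k = -1
    subst hk1
    rw [if_neg (by omega), if_pos (by omega), zero_add]
    refine finsum_congr fun m => ?_
    have h0 : ((-(-1:ℤ) - 1).toNat) = 0 := by norm_num
    rw [h0, zchoose_zero, zchoose_zero, one_smul, one_smul]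
    congr 1
    ring
  · -- k ≤ -2
    rw [if_pos (by omega), if_pos (by omega)]
    set j' : ℕ := (-k-2).toNat with hj'
    have hj1 : (-k-1).toNat = j' + 1 := by omega
    have hj2 : (-(k+1)-1).toNat = j' := by omega
    rw [hj1, hj2]
    have hstep : ∀ m : ℤ, zchoose (-m) (j' + 1) • H m (l - m + k + 1)
        = zchoose (-m-1) j' • H m (l - m + (k+1))
          + zchoose (-m-1) (j'+1) • H m ((l+1) - m + k) := by
      intro m
      have hP : zchoose (-m) (j' + 1) = zchoose (-m-1) (j'+1) + zchoose (-m-1) j' := by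
        have h := zchoose_succ_succ (-m-1) j'
        rw [show ((-m-1) + 1 : ℤ) = -m by ring] at h
        exact h
      have h2 : l - m + k + 1 = l - m + (k + 1) := by ring
      have h3 : l - m + k + 1 = (l + 1) - m + k := by ring
      rw [hP, add_smul, add_comm, ← h2, ← h3]
    rw [finsum_congr hstep]
    exact finsum_add_distrib
      (trunc2_supportFinite hH _ (k+1) l) (trunc2_supportFinite hH _ k (l+1))

lemma substPoly_C (a : ℂ) : substPoly (C a) = (C a : MvPolynomial (Fin 2) ℂ) := by
  simp [substPoly, algebraMap_eq]

lemma substPoly_add (p q : MvPolynomial (Fin 2) ℂ) :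
    substPoly (p + q) = substPoly p + substPoly q := map_add _ _ _

lemma substPoly_mul (p q : MvPolynomial (Fin 2) ℂ) :
    substPoly (p * q) = substPoly p * substPoly q := map_mul _ _ _

lemma substPoly_X0 : substPoly (X 0) = (X 0 + X 1 : MvPolynomial (Fin 2) ℂ) := by
  simp [substPoly]

lemma substPoly_X1 : substPoly (X 1) = (X 1 : MvPolynomial (Fin 2) ℂ) := by
  simp [substPoly]

lemma substX1_smul (a : ℂ) {G : ℤ → ℤ → W} (hG : Trunc2 G) (k l : ℤ) :
    substX1 (fun m n => a • G m n) k l = a • substX1 G k l := by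
  unfold substX1
  split
  · rw [smul_finsum' a (trunc2_supportFinite hG (fun m => zchoose (-m-1) (-k-1).toNat) k l)]
    refine finsum_congr fun m => ?_
    show zchoose (-m-1) (-k-1).toNat • (a • G m (l - m + k))
        = a • (zchoose (-m-1) (-k-1).toNat • G m (l - m + k))
    rw [smul_comm]
  · rw [smul_zero]

lemma substX1_add {A B : ℤ → ℤ → W} (hA : Trunc2 A) (hB : Trunc2 B) (k l : ℤ) :
    substX1 (fun m n => A m n + B m n) k l = substX1 A k l + substX1 B k l := by
  unfold substX1
  split
  · rw [← finsum_add_distrib (trunc2_supportFinite hA (fun m => zchoose (-m-1) (-k-1).toNat) k l)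
      (trunc2_supportFinite hB (fun m => zchoose (-m-1) (-k-1).toNat) k l)]
    refine finsum_congr fun m => ?_
    show zchoose (-m-1) (-k-1).toNat • (A m (l - m + k) + B m (l - m + k)) = _
    rw [smul_add]
  · rw [add_zero]

lemma substX1_polyMul (r : MvPolynomial (Fin 2) ℂ) :
    ∀ (G : ℤ → ℤ → W), Trunc2 G → ∀ k l : ℤ,
      substX1 (fun m n => polyMul r G m n) k l
        = polyMul (substPoly r) (fun a b => substX1 G a b) k l := by
  induction r using MvPolynomial.induction_on with
  | C a =>
    intro G hG k l
    rw [substPoly_C, polyMul_C, substX1_congr (fun a b => polyMul_C _ G a b),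
      substX1_smul a hG]
  | add p q hp hq =>
    intro G hG k l
    rw [substPoly_add, polyMul_add_poly,
      substX1_congr (fun a b => polyMul_add_poly p q G a b),
      substX1_add (trunc2_polyMul hG p) (trunc2_polyMul hG q), hp G hG, hq G hG]
  | mul_X p i hp =>
    intro G hG k l
    have hH : Trunc2 (fun m n => polyMul p G m n) := trunc2_polyMul hG p
    have hi : i = 0 ∨ i = 1 := by
      rcases i with ⟨(_|_|n), h⟩
      · exact Or.inl rfl
      · exact Or.inr rfl
      · omega
    rcases hi with rfl | rfl
    · rw [substX1_congr (fun a b => polyMul_mul_X0 p G a b),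
        substX1_shift0 hH, hp G hG, hp G hG,
        substPoly_mul, substPoly_X0, mul_add, polyMul_add_poly,
        polyMul_mul_X0, polyMul_mul_X1]
    · rw [substX1_congr (fun a b => polyMul_mul_X1 p G a b),
        substX1_shift1, hp G hG,
        substPoly_mul, substPoly_X1, polyMul_mul_X1]

lemma fin2_cases (i : Fin 2) : i = 0 ∨ i = 1 := by
  rcases i with ⟨(_|_|n), h⟩
  · exact Or.inl rfl
  · exact Or.inr rfl
  · omega

lemma finset_trunc {ι : Type} (S : Finset ι) (f : ι → ℤ → W)
    (h : ∀ d ∈ S, ∃ M : ℤ, ∀ l < M, f d l = 0) :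
    ∃ M : ℤ, ∀ l < M, ∑ d ∈ S, f d l = 0 := by
  classical
  induction S using Finset.induction_on with
  | empty => exact ⟨0, fun l _ => by simp⟩
  | @insert a s ha ih =>
    obtain ⟨M1, hM1⟩ := h _ (Finset.mem_insert_self _ _)
    obtain ⟨M2, hM2⟩ := ih (fun d hd => h d (Finset.mem_insert_of_mem hd))
    exact ⟨min M1 M2, fun l hl => by
      rw [Finset.sum_insert ha, hM1 l (by omega), hM2 l (by omega), zero_add]⟩

lemma polyMul_cancel (r : MvPolynomial (Fin 2) ℂ) (hr : r ≠ 0) (D : ℤ → ℤ → W)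
    (hK : ∃ K : ℤ, ∀ k l : ℤ, K ≤ k → D k l = 0)
    (hM : ∀ k : ℤ, ∃ M : ℤ, ∀ l < M, D k l = 0)
    (h0 : ∀ k l : ℤ, polyMul r D k l = 0) :
    ∀ k l : ℤ, D k l = 0 := by
  by_contra hD
  push_neg at hD
  obtain ⟨k0, l0, hne⟩ := hD
  obtain ⟨K, hK⟩ := hK
  obtain ⟨ks, hksP, hksmax⟩ := Int.exists_greatest_of_bdd
    (P := fun k => ∃ l, D k l ≠ 0)
    ⟨K, fun z hz => by
      by_contra hzK
      obtain ⟨l, hl⟩ := hz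
      exact hl (hK z l (by omega))⟩
    ⟨k0, l0, hne⟩
  obtain ⟨Ms, hMs⟩ := hM ks
  obtain ⟨ls, hlsP, hlsmin⟩ := Int.exists_least_of_bdd
    (P := fun l => D ks l ≠ 0)
    ⟨Ms, fun z hz => by
      by_contra hzM
      exact hz (hMs z (by omega))⟩
    hksP
  have hup : ∀ k l : ℤ, ks < k → D k l = 0 := by
    intro k l hkl
    by_contra hne'
    exact absurd (hksmax k ⟨l, hne'⟩) (not_le.mpr hkl)
  have hlow : ∀ l : ℤ, l < ls → D ks l = 0 := by
    intro l hl
    by_contra hne'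
    exact absurd (hlsmin l hne') (not_le.mpr hl)
  -- polynomial side
  have hsupp : r.support.Nonempty :=
    Finset.nonempty_iff_ne_empty.mpr fun h => hr (support_eq_empty.mp h)
  have himg0 : (r.support.image fun d => d 0).Nonempty := hsupp.image _
  set a : ℕ := (r.support.image fun d => d 0).min' himg0 with ha
  set Fib : Finset (Fin 2 →₀ ℕ) := r.support.filter (fun d => d 0 = a) with hFib
  have hFibne : Fib.Nonempty := by
    obtain ⟨d, hd, hda⟩ := Finset.mem_image.mp ((r.support.image fun d => d 0).min'_mem himg0)
    exact ⟨d, Finset.mem_filter.mpr ⟨hd, hda⟩⟩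
  have himg1 : (Fib.image fun d => d 1).Nonempty := hFibne.image _
  set b : ℕ := (Fib.image fun d => d 1).max' himg1 with hb
  obtain ⟨ds, hdsFib, hdsb⟩ := Finset.mem_image.mp ((Fib.image fun d => d 1).max'_mem himg1)
  have hdsS : ds ∈ r.support := (Finset.mem_filter.mp hdsFib).1
  have hdsa : ds 0 = a := (Finset.mem_filter.mp hdsFib).2
  -- evaluate
  have key := h0 (ks - a) (ls - b)
  rw [polyMul_eq_sum r D (ks - a) (ls - b) (subset_refl _)] at key
  rw [Finset.sum_eq_single_of_mem ds hdsS ?hothers] at key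
  · rw [hdsa, hdsb] at key
    have hDval : D (ks - a + a) (ls - b + b) = D ks ls := by norm_num
    rw [hDval] at key
    have hcoeff : r.coeff ds ≠ 0 := mem_support_iff.mp hdsS
    have : D ks ls = 0 := by
      have := congrArg (fun x => (r.coeff ds)⁻¹ • x) key
      simpa [smul_smul, inv_mul_cancel₀ hcoeff] using this
    exact hlsP this
  case hothers =>
    intro d hd hdne
    have hamin : a ≤ d 0 :=
      (r.support.image fun d => d 0).min'_le _ (Finset.mem_image_of_mem _ hd)
    rcases lt_or_eq_of_le hamin with hlt | heq
    · rw [hup _ _ (by omega), smul_zero]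
    · have hdFib : d ∈ Fib := Finset.mem_filter.mpr ⟨hd, heq.symm⟩
      have hbmax : d 1 ≤ b := (Fib.image fun d => d 1).le_max' _ (Finset.mem_image_of_mem _ hdFib)
      rcases lt_or_eq_of_le hbmax with hlt1 | heq1
      · have : ks - a + d 0 = ks := by omega
        rw [this, hlow _ (by omega), smul_zero]
      · exfalso
        apply hdne
        ext j
        rcases fin2_cases j with rfl | rfl
        · rw [← heq, hdsa]
        · rw [heq1, hdsb]

lemma substPoly_ne_zero {q : MvPolynomial (Fin 2) ℂ} (hq : q ≠ 0) : substPoly q ≠ 0 := by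
  intro h
  apply hq
  have hcomp : (aeval (R := ℂ) ![X 0 - X 1, X 1]).comp (aeval ![X 0 + X 1, X 1])
      = AlgHom.id ℂ (MvPolynomial (Fin 2) ℂ) := by
    apply MvPolynomial.algHom_ext
    intro i
    rcases fin2_cases i with rfl | rfl <;> simp
  have hinv : aeval (R := ℂ) ![X 0 - X 1, X 1] (substPoly q) = q := by
    rw [substPoly, ← AlgHom.comp_apply, hcomp, AlgHom.id_apply]
  rw [← hinv, h, map_zero]

end TwoVar2

/-- Remark 2.2: if `(W, Y_W)` is a quasi module at infinity for a vertex
algebra `V` and `u, v ∈ V`, then the weak associativity relation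
`(p(x₁,x₂)Y_W(u,x₁)Y_W(v,x₂))|_{x₁=x₂+x₀} = p(x₀+x₂,x₂) Y_W(Y(u,x₀)v, x₂)`
holds for ANY nonzero polynomial `p(x₁,x₂)` such that
`p(x₁,x₂)Y_W(u,x₁)Y_W(v,x₂) ∈ Hom(W, W((x₁⁻¹,x₂⁻¹)))`. -/
theorem weak_assoc_any_polynomial {V W : Type}
    [AddCommGroup V] [Module ℂ V] [AddCommGroup W] [Module ℂ W]
    (VA : VertexAlg V) (M : QModInf VA W) (u v : V)
    (p : MvPolynomial (Fin 2) ℂ) (hp : p ≠ 0)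
    (hcomp : Compat p (M.Y u) (M.Y v)) :
    AssocEq p (M.Y u) (M.Y v) (fun k l => M.Y (VA.Y u k v) l) := by
  obtain ⟨q, hq, hqcomp, hqassoc⟩ := M.weak_assoc u v
  intro w k l
  set F : ℤ → ℤ → W := fun m n => M.Y u m (M.Y v n w) with hF
  set c' : ℤ → ℤ → W := fun a b => M.Y (VA.Y u a v) b w with hc'
  show substX1 (polyMul p F) k l = polyMul (substPoly p) c' k l
  have hTp : Trunc2 (fun m n => polyMul p F m n) := hcomp w
  have hTq : Trunc2 (fun m n => polyMul q F m n) := hqcomp w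
  set D : ℤ → ℤ → W :=
    fun a b => substX1 (polyMul p F) a b - polyMul (substPoly p) c' a b with hD
  have hDz : ∀ a b : ℤ, D a b = 0 := by
    apply polyMul_cancel (substPoly q) (substPoly_ne_zero hq) D
    · -- upper truncation in k
      obtain ⟨Nc, hNc⟩ := VA.trunc u v
      refine ⟨max 0 Nc, fun a b hab => ?_⟩
      have h1 : substX1 (polyMul p F) a b = 0 := by
        unfold substX1
        rw [if_neg (by omega)]
      have h2 : polyMul (substPoly p) c' a b = 0 := by
        rw [polyMul_eq_sum _ c' a b (subset_refl _)]
        refine Finset.sum_eq_zero fun d _ => ?_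
        have hd0 : (0:ℤ) ≤ (d 0 : ℤ) := Int.ofNat_nonneg _
        have hz : VA.Y u (a + d 0) v = 0 := hNc _ (by omega)
        rw [hc']
        show (substPoly p).coeff d • (M.Y (VA.Y u (a + d 0) v)) (b + d 1) w = 0
        rw [hz, map_zero]
        simp
      rw [hD]
      show substX1 (polyMul p F) a b - polyMul (substPoly p) c' a b = 0
      rw [h1, h2, sub_zero]
    · -- lower truncation in l
      intro a
      obtain ⟨N1, hN1⟩ := hcomp w
      have part1 : ∀ b : ℤ, b < 2 * N1 - a → substX1 (polyMul p F) a b = 0 := by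
        intro b hb
        unfold substX1
        split
        · apply finsum_eq_zero_of_forall_eq_zero
          intro m
          rcases lt_or_ge m N1 with hm | hm
          · rw [hN1 m _ (Or.inl hm), smul_zero]
          · rw [hN1 m _ (Or.inr (by omega)), smul_zero]
        · rfl
      have part2 : ∃ M2 : ℤ, ∀ b < M2, polyMul (substPoly p) c' a b = 0 := by
        obtain ⟨M2, hM2⟩ := finset_trunc (substPoly p).support
          (fun d b => (substPoly p).coeff d • c' (a + d 0) (b + d 1))
          (fun d _ => by
            obtain ⟨Md, hMd⟩ := M.trunc (VA.Y u (a + d 0) v) w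
            refine ⟨Md - d 1, fun b hb => ?_⟩
            rw [hc']
            show (substPoly p).coeff d • (M.Y (VA.Y u (a + d 0) v)) (b + d 1) w = 0
            rw [hMd _ (by omega), smul_zero])
        exact ⟨M2, fun b hb => by
          rw [polyMul_eq_sum _ c' a b (subset_refl _)]
          exact hM2 b hb⟩
      obtain ⟨M2, hM2⟩ := part2
      refine ⟨min (2 * N1 - a) M2, fun b hb => ?_⟩
      rw [hD]
      show substX1 (polyMul p F) a b - polyMul (substPoly p) c' a b = 0
      rw [part1 b (by omega), hM2 b (by omega), sub_zero]
    · -- the product vanishes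
      intro a b
      have hsub : polyMul (substPoly q) D a b
          = polyMul (substPoly q) (fun x y => substX1 (polyMul p F) x y) a b
            - polyMul (substPoly q) (fun x y => polyMul (substPoly p) c' x y) a b :=
        polyMul_sub_F _ _ _ a b
      rw [hsub]
      have e1 : polyMul (substPoly q) (fun x y => substX1 (polyMul p F) x y) a b
          = substX1 (fun m n => polyMul q (fun x y => polyMul p F x y) m n) a b :=
        (substX1_polyMul q (polyMul p F) hTp a b).symm
      have e2 : substX1 (fun m n => polyMul q (fun x y => polyMul p F x y) m n) a b
          = substX1 (fun m n => polyMul p (fun x y => polyMul q F x y) m n) a b :=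
        substX1_congr (fun x y => polyMul_comm q p F x y) a b
      have e3 : substX1 (fun m n => polyMul p (fun x y => polyMul q F x y) m n) a b
          = polyMul (substPoly p) (fun x y => substX1 (polyMul q F) x y) a b :=
        substX1_polyMul p (polyMul q F) hTq a b
      have e4 : polyMul (substPoly p) (fun x y => substX1 (polyMul q F) x y) a b
          = polyMul (substPoly p) (fun x y => polyMul (substPoly q) c' x y) a b :=
        polyMul_congr _ (fun x y => hqassoc w x y) a b
      have e5 : polyMul (substPoly p) (fun x y => polyMul (substPoly q) c' x y) a b
          = polyMul (substPoly q) (fun x y => polyMul (substPoly p) c' x y) a b :=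
        polyMul_comm _ _ _ a b
      rw [e1, e2, e3, e4, e5, sub_self]
  have := hDz k l
  rw [hD] at this
  have h2 : substX1 (polyMul p F) k l - polyMul (substPoly p) c' k l = 0 := this
  exact sub_eq_zero.mp h2
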